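/- Let Σ be a finite alphabet and f : Σ → ℤ a function with f(a) ≥ −1 for all a ∈ Σ. If w is an f-valid word of length n, then the n cyclic rotations of w (the words w_{ℓ+1}⋯w_n w₁⋯w_ℓ for ℓ = 0,1,…,n−1) are pairwise distinct. -/

import Mathlib

/-- A word `w` over an alphabet `α` is `f`-valid if the sum of `f` over its letters is `-1`. -/
def IsFValid {α : Type*} (f : α → ℤ) (w : List α) : Prop :=
  (w.map f).sum = -1

/-- If `u` and `v` commute as lists, their `f`-sums are proportional to their lengths. -/
lemma comm_sum_aux {α : Type*} (f : α → ℤ) :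
    ∀ m : ℕ, ∀ u v : List α, u.length + v.length ≤ m → u ++ v = v ++ u →
      (u.map f).sum * v.length = (v.map f).sum * u.length := by
  intro m
  induction m with
  | zero =>
    intro u v hlen h
    have hu : u = [] := by
      cases u with
      | nil => rfl
      | cons a t => simp at hlen
    subst hu; simp
  | succ m ih =>
    intro u v hlen h
    rcases eq_or_ne u [] with hu | hu
    · subst hu; simp
    rcases eq_or_ne v [] with hv | hv
    · subst hv; simp
    rcases le_or_gt u.length v.length with hle | hlt
    · -- v = u ++ v'
      have hpref : u = v.take u.length := by
        have h1 : (u ++ v).take u.length = u := List.take_left (l₁ := u) (l₂ := v)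
        have h2 : (v ++ u).take u.length = v.take u.length :=
          List.take_append_of_le_length hle
        rw [h] at h1
        rw [h2] at h1
        exact h1.symm
      set v' := v.drop u.length with hv'
      have hveq : v = u ++ v' := by
        conv_lhs => rw [← List.take_append_drop u.length v]
        rw [← hpref]
      have hcomm : u ++ v' = v' ++ u := by
        have : u ++ (u ++ v') = (u ++ v') ++ u := by rw [← hveq, h, hveq]
        rw [List.append_assoc] at this
        exact List.append_cancel_left this
      have hul : 1 ≤ u.length := List.length_pos_iff.mpr hu
      have hlen' : u.length + v'.length ≤ m := by
        have : v'.length = v.length - u.length := by simp [hv']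
        omega
      have ihh := ih u v' hlen' hcomm
      have hlenv : (v.length : ℤ) = u.length + v'.length := by
        rw [hveq]; push_cast [List.length_append]; ring
      have hsumv : (v.map f).sum = (u.map f).sum + (v'.map f).sum := by
        rw [hveq]; simp
      rw [hsumv, hlenv]
      push_cast at ihh ⊢
      linarith [ihh]
    · -- u = v ++ u'
      have hle : v.length ≤ u.length := le_of_lt hlt
      have hpref : v = u.take v.length := by
        have h1 : (v ++ u).take v.length = v := List.take_left (l₁ := v) (l₂ := u)
        have h2 : (u ++ v).take v.length = u.take v.length :=
          List.take_append_of_le_length hle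
        rw [← h] at h1
        rw [h2] at h1
        exact h1.symm
      set u' := u.drop v.length with hu'
      have hueq : u = v ++ u' := by
        conv_lhs => rw [← List.take_append_drop v.length u]
        rw [← hpref]
      have hcomm : u' ++ v = v ++ u' := by
        have : v ++ (u' ++ v) = v ++ (v ++ u') := by
          rw [← List.append_assoc, ← hueq, h, hueq]
        exact List.append_cancel_left this
      have hvl : 1 ≤ v.length := List.length_pos_iff.mpr hv
      have hlen' : u'.length + v.length ≤ m := by
        have : u'.length = u.length - v.length := by simp [hu']
        omega
      have ihh := ih u' v hlen' hcomm
      have hlenu : (u.length : ℤ) = v.length + u'.length := by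
        rw [hueq]; push_cast [List.length_append]; ring
      have hsumu : (u.map f).sum = (v.map f).sum + (u'.map f).sum := by
        rw [hueq]; simp
      rw [hsumu, hlenu]
      push_cast at ihh ⊢
      linarith [ihh]

lemma rotate_mul_period {α : Type*} (l : List α) (p : ℕ) (h : l.rotate p = l) :
    ∀ k : ℕ, l.rotate (k * p) = l := by
  intro k
  induction k with
  | zero => simp
  | succ k ih =>
    have : l.rotate (k * p + p) = (l.rotate (k * p)).rotate p := by
      rw [List.rotate_rotate]
    rw [Nat.succ_mul, this, ih, h]

set_option maxHeartbeats 1000000 in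
/-- If `w` is an `f`-valid word of length `n` (with `f ≥ -1` on a finite
alphabet), then the `n` cyclic rotations `w_{ℓ+1}⋯w_n w_1⋯w_ℓ`, for `ℓ = 0,1,…,n-1`,
are pairwise distinct. -/
theorem rotations_of_valid_word_pairwise_distinct
    {α : Type*} [Fintype α] (f : α → ℤ) (hf : ∀ x : α, -1 ≤ f x)
    (w : List α) (n : ℕ) (hn : n = w.length)
    (hw : IsFValid f w) :
    ∀ ℓ₁ ℓ₂ : ℕ, ℓ₁ < n → ℓ₂ < n →
      w.drop ℓ₁ ++ w.take ℓ₁ = w.drop ℓ₂ ++ w.take ℓ₂ → ℓ₁ = ℓ₂ := by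
  have hwne : w ≠ [] := by
    intro hnil
    rw [IsFValid, hnil] at hw
    simp at hw
  have hnpos : 0 < n := by
    rw [hn]; exact List.length_pos_iff.mpr hwne
  suffices key : ∀ a b : ℕ, a < b → b < n → w.drop a ++ w.take a ≠ w.drop b ++ w.take b by
    intro ℓ₁ ℓ₂ h1 h2 heq
    rcases lt_trichotomy ℓ₁ ℓ₂ with h | h | h
    · exact absurd heq (key ℓ₁ ℓ₂ h h2)
    · exact h
    · exact absurd heq.symm (key ℓ₂ ℓ₁ h h1)
  intro a b hab hbn heq
  have han : a ≤ w.length := by omega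
  have hbnle : b ≤ w.length := by omega
  have hra : w.rotate a = w.drop a ++ w.take a := List.rotate_eq_drop_append_take han
  have hrb : w.rotate b = w.drop b ++ w.take b := List.rotate_eq_drop_append_take hbnle
  have hrot : w.rotate a = w.rotate b := by rw [hra, hrb, heq]
  -- rotate by (n - b) on both sides
  set e := a + (n - b) with he
  have hrote : w.rotate e = w := by
    have h1 : (w.rotate a).rotate (n - b) = w.rotate e := by
      rw [List.rotate_rotate]
    have h2 : (w.rotate b).rotate (n - b) = w := by
      rw [List.rotate_rotate]
      have : b + (n - b) = n := by omega
      rw [this, hn, List.rotate_length]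
    rw [← h1, hrot, h2]
  have hepos : 0 < e := by omega
  have helt : e < n := by omega
  -- minimal positive period
  have hex : ∃ p, 0 < p ∧ w.rotate p = w := ⟨e, hepos, hrote⟩
  classical
  set p := Nat.find hex with hp
  obtain ⟨hppos, hprot⟩ := Nat.find_spec hex
  have hple : p ≤ e := Nat.find_le ⟨hepos, hrote⟩
  have hpltn : p < n := lt_of_le_of_lt hple helt
  -- p divides n
  have hdvd : p ∣ n := by
    by_contra hnd
    have hmodpos : 0 < n % p := Nat.pos_of_ne_zero (fun h0 => hnd (Nat.dvd_of_mod_eq_zero h0))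
    have hmodlt : n % p < p := Nat.mod_lt _ hppos
    have hrotmod : w.rotate (n % p) = w := by
      have h1 : w.rotate ((n / p) * p) = w := rotate_mul_period w p hprot (n / p)
      have h2 : (w.rotate ((n / p) * p)).rotate (n % p) = w.rotate n := by
        rw [List.rotate_rotate]
        congr 1
        rw [Nat.mul_comm]
        exact Nat.div_add_mod n p
      rw [h1] at h2
      rw [h2, hn, List.rotate_length]
    exact Nat.find_min hex hmodlt ⟨hmodpos, hrotmod⟩
  obtain ⟨m, hm⟩ := hdvd
  have hm2 : 2 ≤ m := by
    rcases Nat.lt_or_ge m 2 with h | h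
    · interval_cases m <;> omega
    · exact h
  -- w = u ++ v with v ++ u = u ++ v
  set u := w.take p with hu
  set v := w.drop p with hv
  have hpw : p ≤ w.length := by omega
  have hul : u.length = p := by simp [hu]; omega
  have hvl : v.length = n - p := by simp [hv]; omega
  have huv : u ++ v = w := List.take_append_drop p w
  have hvu : v ++ u = w := by
    rw [← List.rotate_eq_drop_append_take hpw, hprot]
  have hcomm : u ++ v = v ++ u := by rw [huv, hvu]
  have hsum := comm_sum_aux f (u.length + v.length) u v le_rfl hcomm
  set su := (u.map f).sum with hsu
  set sv := (v.map f).sum with hsv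
  have htot : su + sv = -1 := by
    have : ((u ++ v).map f).sum = -1 := by rw [huv]; exact hw
    simpa using this
  -- su * (n - p) = sv * p
  rw [hul, hvl] at hsum
  have hnp : (n : ℤ) - p = p * (m - 1) := by
    have : (n : ℤ) = p * m := by exact_mod_cast congrArg (Nat.cast : ℕ → ℤ) hm
    push_cast
    rw [this]; ring
  have hcast : ((n - p : ℕ) : ℤ) = (n : ℤ) - p := by
    push_cast [Nat.cast_sub (le_of_lt hpltn)]; ring
  rw [hcast, hnp] at hsum
  -- hsum : su * (p * (m-1)) = sv * p
  have hppos' : (0 : ℤ) < p := by exact_mod_cast hppos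
  have hsv_eq : sv = su * (m - 1) := by
    have : (su * (m - 1)) * p = sv * p := by linarith [hsum]; 
    exact (mul_right_cancel₀ (ne_of_gt hppos') this).symm
  have hfinal : su * m = -1 := by
    rw [hsv_eq] at htot
    have hm1 : (1 : ℤ) ≤ m := by exact_mod_cast Nat.one_le_of_lt hm2
    nlinarith [htot]
  have hm2' : (2 : ℤ) ≤ m := by exact_mod_cast hm2
  rcases le_or_gt 0 su with hpos | hneg
  · have : (0 : ℤ) ≤ su * m := mul_nonneg hpos (by linarith)
    linarith
  · have hsu1 : su ≤ -1 := by omega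
    have : su * (m : ℤ) ≤ (-1) * (m : ℤ) := mul_le_mul_of_nonneg_right hsu1 (by linarith)
    linarith
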